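/- Let G be a simple graph on [n] with diam(G) >= 3, and let C ⊆ [n] be a nonempty set such that: (i) for every pair i,j with dist_G(i,j) >= 3, (N_G[i] ∪ N_G[j]) ∩ C ≠ ∅; (ii) for every i ∈ C there exist j,k with dist_G(j,k) >= 3 and (N_G[j] ∪ N_G[k]) ∩ C = {i}; (iii) for every j ∉ C there exist neighbors j_1, j_2 of j with N_G[j_1], N_G[j_2] ⊆ [n] \ C and N_G[j_1] ∩ N_G[j_2] = {j}. Then for f = ∏_{i ∉ C} x_i, one has NI(G)^2 : f = (x_1,...,x_n); in particular the maximal ideal is an associated prime of S/NI(G)^2. -/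

import Mathlib

open MvPolynomial
open scoped Classical

/-- The closed neighborhood of a vertex `i` of `G`, as a `Finset`. -/
noncomputable def closedNbhd {n : ℕ} (G : SimpleGraph (Fin n)) (i : Fin n) : Finset (Fin n) :=
  Finset.univ.filter (fun j => j = i ∨ G.Adj i j)



-- exponent vector of a finset
noncomputable def expOf {n : ℕ} (s : Finset (Fin n)) : Fin n →₀ ℕ :=
  ∑ j ∈ s, Finsupp.single j 1

lemma expOf_apply {n : ℕ} (s : Finset (Fin n)) (v : Fin n) :
    expOf s v = if v ∈ s then 1 else 0 := by
  classical
  simp only [expOf, Finset.sum_apply', Finsupp.single_apply]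
  rw [Finset.sum_ite_eq' s v (fun _ => 1)]

lemma prod_X_eq {n : ℕ} {k : Type*} [Field k] (s : Finset (Fin n)) :
    ∏ j ∈ s, (X j : MvPolynomial (Fin n) k) = monomial (expOf s) 1 := by
  rw [expOf, monomial_sum_one]
  exact Finset.prod_congr rfl fun j _ => by rw [← pow_one (X j), X_pow_eq_monomial]

lemma mem_closedNbhd {n : ℕ} (G : SimpleGraph (Fin n)) (i v : Fin n) :
    v ∈ closedNbhd G i ↔ (v = i ∨ G.Adj i v) := by
  simp [closedNbhd]

-- disjoint closed neighborhoods iff edist ≥ 3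
lemma edist_ge_three_iff {n : ℕ} (G : SimpleGraph (Fin n)) (i j : Fin n) :
    3 ≤ G.edist i j ↔ ∀ v, ¬(v ∈ closedNbhd G i ∧ v ∈ closedNbhd G j) := by
  constructor
  · rintro h v ⟨hvi, hvj⟩
    rw [mem_closedNbhd] at hvi hvj
    have h1 : G.edist i v ≤ 1 := by
      rcases hvi with rfl | ha
      · simp
      · exact le_trans (SimpleGraph.Walk.edist_le ha.toWalk) (by simp)
    have h2 : G.edist v j ≤ 1 := by
      rcases hvj with rfl | ha
      · simp [SimpleGraph.edist_comm]
      · exact le_trans (SimpleGraph.Walk.edist_le ha.symm.toWalk) (by simp)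
    have := SimpleGraph.edist_triangle (G := G) (u := i) (v := v) (w := j)
    have : G.edist i j ≤ 2 := le_trans this (by
      calc G.edist i v + G.edist v j ≤ 1 + 1 := add_le_add h1 h2
      _ = 2 := by norm_num)
    exact absurd (le_trans h this) (by norm_num)
  · intro h
    by_contra hlt
    push_neg at hlt
    have hne : G.edist i j ≠ ⊤ := by
      intro ht; rw [ht] at hlt; exact absurd hlt (by simp)
    obtain ⟨p, hp⟩ := SimpleGraph.exists_walk_of_edist_ne_top hne
    have hlen : (p.length : ℕ∞) < 3 := by rw [hp]; exact hlt
    have hlen' : p.length ≤ 2 := by exact_mod_cast Nat.lt_succ_iff.mp (by exact_mod_cast hlen)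
    clear hp hlt hne
    cases p with
    | nil => exact h i ⟨by simp [mem_closedNbhd], by simp [mem_closedNbhd]⟩
    | @cons _ b _ ha q =>
      cases q with
      | nil => exact h j ⟨by simp [mem_closedNbhd, ha], by simp [mem_closedNbhd]⟩
      | @cons _ c _ ha' q' =>
        cases q' with
        | nil => exact h b ⟨by simp [mem_closedNbhd, ha], by simp [mem_closedNbhd, ha'.symm]⟩
        | cons ha'' q'' => simp [SimpleGraph.Walk.length_cons] at hlen'


/-- The closed neighborhood ideal of `G` in `k[x_1, …, x_n]`. -/
noncomputable def NI (k : Type*) [Field k] {n : ℕ} (G : SimpleGraph (Fin n)) :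
    Ideal (MvPolynomial (Fin n) k) :=
  Ideal.span (Set.range fun i => ∏ j ∈ closedNbhd G i, X j)

/-- The maximal homogeneous ideal `(x_1, …, x_n)`. -/
noncomputable def maxIdeal (k : Type*) [Field k] (n : ℕ) : Ideal (MvPolynomial (Fin n) k) :=
  Ideal.span (Set.range (X : Fin n → MvPolynomial (Fin n) k))

lemma NI_sq_eq {n : ℕ} (k : Type*) [Field k] (G : SimpleGraph (Fin n)) :
    NI k G ^ 2 = Ideal.span ((fun s => (monomial s (1 : k))) ''
      {m | ∃ i j : Fin n, m = expOf (closedNbhd G i) + expOf (closedNbhd G j)}) := by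
  have hNI : NI k G = Ideal.span ((fun s => (monomial s (1 : k))) ''
      (Set.range fun i => expOf (closedNbhd G i))) := by
    rw [NI, ← Set.range_comp]
    congr 1
    ext p
    simp only [Set.mem_range, Function.comp_apply]
    constructor
    · rintro ⟨i, rfl⟩; exact ⟨i, (prod_X_eq _).symm⟩
    · rintro ⟨i, rfl⟩; exact ⟨i, prod_X_eq _⟩
  rw [pow_two, hNI, Ideal.span_mul_span']
  congr 1
  ext p
  simp only [Set.mem_mul, Set.mem_image, Set.mem_range, Set.mem_setOf_eq]
  constructor
  · rintro ⟨a, ⟨_, ⟨i, rfl⟩, rfl⟩, b, ⟨_, ⟨j, rfl⟩, rfl⟩, rfl⟩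
    exact ⟨_, ⟨i, j, rfl⟩, by rw [monomial_mul, mul_one]⟩
  · rintro ⟨_, ⟨i, j, rfl⟩, rfl⟩
    exact ⟨_, ⟨_, ⟨i, rfl⟩, rfl⟩, _, ⟨_, ⟨j, rfl⟩, rfl⟩, by rw [monomial_mul, mul_one]⟩

lemma mem_NI_sq_iff {n : ℕ} (k : Type*) [Field k] (G : SimpleGraph (Fin n)) (m : Fin n →₀ ℕ) :
    (monomial m (1 : k)) ∈ NI k G ^ 2 ↔
      ∃ i j : Fin n, expOf (closedNbhd G i) + expOf (closedNbhd G j) ≤ m := by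
  rw [NI_sq_eq, mem_ideal_span_monomial_image]
  rw [support_monomial, if_neg (one_ne_zero)]
  constructor
  · intro h
    obtain ⟨si, ⟨i, j, rfl⟩, hle⟩ := h m (Finset.mem_singleton_self m)
    exact ⟨i, j, hle⟩
  · rintro ⟨i, j, hle⟩ xi hxi
    rw [Finset.mem_singleton] at hxi
    subst hxi
    exact ⟨_, ⟨i, j, rfl⟩, hle⟩

lemma maxIdeal_eq_ker {n : ℕ} (k : Type*) [Field k] :
    maxIdeal k n = RingHom.ker (constantCoeff (σ := Fin n) (R := k)) := by
  ext p
  rw [maxIdeal, ← Set.image_univ, mem_ideal_span_X_image, RingHom.mem_ker,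
    constantCoeff_eq]
  constructor
  · intro h
    by_contra hc
    obtain ⟨i, _, hi⟩ := h 0 (mem_support_iff.mpr hc)
    exact hi rfl
  · intro h m hm
    by_contra hc
    push_neg at hc
    have : m = 0 := by
      ext i
      simpa using hc i (Set.mem_univ i)
    subst this
    exact (mem_support_iff.mp hm) h

lemma maxIdeal_isMaximal {n : ℕ} (k : Type*) [Field k] : (maxIdeal k n).IsMaximal := by
  rw [maxIdeal_eq_ker]
  exact RingHom.ker_isMaximal_of_surjective _ (fun a => ⟨C a, constantCoeff_C _ a⟩)

/-- Suppose `G` has diameter at least `3` and `C` is a nonempty set of vertices such that: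
(i) for every pair `i, j` at distance at least `3`, `(N[i] ∪ N[j]) ∩ C ≠ ∅`;
(ii) for every `i ∈ C` there is a pair `j, l` at distance at least `3` with
`(N[j] ∪ N[l]) ∩ C = {i}`;
(iii) every `j ∉ C` has neighbors `j₁, j₂` with `N[j₁], N[j₂] ⊆ [n] \ C` and
`N[j₁] ∩ N[j₂] = {j}`.
Then `NI(G)^2 : ∏_{i ∉ C} x_i = (x_1, …, x_n)`; in particular the maximal homogeneous
ideal is an associated prime of `S/NI(G)^2`. -/
theorem colon_eq_max_of_cover_conditions {n : ℕ} {k : Type*} [Field k]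
    (G : SimpleGraph (Fin n)) (hdiam : ∃ u v : Fin n, 3 ≤ G.edist u v)
    (C : Finset (Fin n)) (hC : C.Nonempty)
    (h1 : ∀ i j : Fin n, 3 ≤ G.edist i j →
      ((closedNbhd G i ∪ closedNbhd G j) ∩ C).Nonempty)
    (h2 : ∀ i ∈ C, ∃ j l : Fin n, 3 ≤ G.edist j l ∧
      (closedNbhd G j ∪ closedNbhd G l) ∩ C = {i})
    (h3 : ∀ j ∉ C, ∃ j₁ j₂ : Fin n, G.Adj j j₁ ∧ G.Adj j j₂ ∧
      closedNbhd G j₁ ⊆ Finset.univ \ C ∧ closedNbhd G j₂ ⊆ Finset.univ \ C ∧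
      closedNbhd G j₁ ∩ closedNbhd G j₂ = {j}) :
    Submodule.colon (NI k G ^ 2)
        (Ideal.span {∏ i ∈ Finset.univ \ C, (X i : MvPolynomial (Fin n) k)}) =
      maxIdeal k n ∧
    IsAssociatedPrime (maxIdeal k n) (MvPolynomial (Fin n) k ⧸ (NI k G ^ 2)) := by
  set mF : Fin n →₀ ℕ := expOf (Finset.univ \ C) with hmF
  have hmF_apply : ∀ v, mF v = if v ∈ C then 0 else 1 := by
    intro v
    rw [hmF, expOf_apply]
    by_cases h : v ∈ C <;> simp [h]
  have hfprod : (∏ i ∈ Finset.univ \ C, (X i : MvPolynomial (Fin n) k)) = monomial mF 1 :=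
    prod_X_eq _
  -- f ∉ NI^2
  have hf : (monomial mF (1 : k)) ∉ NI k G ^ 2 := by
    intro hmem
    obtain ⟨i, j, hle⟩ := (mem_NI_sq_iff k G mF).mp hmem
    have hdisj : ∀ v, ¬(v ∈ closedNbhd G i ∧ v ∈ closedNbhd G j) := by
      rintro v ⟨hvi, hvj⟩
      have := hle v
      rw [Finsupp.add_apply, expOf_apply, expOf_apply, if_pos hvi, if_pos hvj,
        hmF_apply] at this
      by_cases h : v ∈ C <;> simp [h] at this
    have hdist := (edist_ge_three_iff G i j).mpr hdisj
    obtain ⟨v, hv⟩ := h1 i j hdist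
    rw [Finset.mem_inter, Finset.mem_union] at hv
    have := hle v
    rw [Finsupp.add_apply, expOf_apply, expOf_apply, hmF_apply, if_pos hv.2] at this
    rcases hv.1 with h | h <;> rw [if_pos h] at this <;> omega
  -- maxIdeal ≤ colon
  have hle : maxIdeal k n ≤ Submodule.colon (NI k G ^ 2)
      (Ideal.span {∏ i ∈ Finset.univ \ C, (X i : MvPolynomial (Fin n) k)}) := by
    rw [maxIdeal, Ideal.span_le]
    rintro _ ⟨t, rfl⟩
    rw [SetLike.mem_coe, Ideal.mem_colon_span_singleton, hfprod, X, monomial_mul, one_mul,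
      mem_NI_sq_iff]
    by_cases ht : t ∈ C
    · obtain ⟨j, l, hd, heq⟩ := h2 t ht
      have hdisj := (edist_ge_three_iff G j l).mp hd
      refine ⟨j, l, ?_⟩
      rw [Finsupp.le_def]
      intro v
      rw [Finsupp.add_apply, Finsupp.add_apply, expOf_apply, expOf_apply,
        Finsupp.single_apply, hmF_apply]
      have hboth := hdisj v
      by_cases hvC : v ∈ C
      · by_cases hvm : v ∈ closedNbhd G j ∪ closedNbhd G l
        · have : v = t := by
            have : v ∈ (closedNbhd G j ∪ closedNbhd G l) ∩ C := by
              rw [Finset.mem_inter]; exact ⟨hvm, hvC⟩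
            rw [heq, Finset.mem_singleton] at this
            exact this
          subst this
          rw [Finset.mem_union] at hvm
          by_cases hj : v ∈ closedNbhd G j <;> by_cases hl : v ∈ closedNbhd G l <;>
            simp_all <;> omega
        · rw [Finset.mem_union] at hvm
          push_neg at hvm
          simp [hvm.1, hvm.2]
      · by_cases hj : v ∈ closedNbhd G j <;> by_cases hl : v ∈ closedNbhd G l <;>
          simp_all <;> omega
    · obtain ⟨j₁, j₂, hadj1, hadj2, hsub1, hsub2, hinter⟩ := h3 t ht
      refine ⟨j₁, j₂, ?_⟩
      rw [Finsupp.le_def]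
      intro v
      rw [Finsupp.add_apply, Finsupp.add_apply, expOf_apply, expOf_apply,
        Finsupp.single_apply, hmF_apply]
      by_cases hvC : v ∈ C
      · have hn1 : v ∉ closedNbhd G j₁ := fun h =>
          (Finset.mem_sdiff.mp (hsub1 h)).2 hvC
        have hn2 : v ∉ closedNbhd G j₂ := fun h =>
          (Finset.mem_sdiff.mp (hsub2 h)).2 hvC
        simp [hn1, hn2]
      · by_cases htv : t = v
        · subst htv
          by_cases hj : t ∈ closedNbhd G j₁ <;> by_cases hl : t ∈ closedNbhd G j₂ <;>
            simp_all <;> omega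
        · have hnboth : ¬(v ∈ closedNbhd G j₁ ∧ v ∈ closedNbhd G j₂) := by
            rintro ⟨ha, hb⟩
            have : v ∈ closedNbhd G j₁ ∩ closedNbhd G j₂ := Finset.mem_inter.mpr ⟨ha, hb⟩
            rw [hinter, Finset.mem_singleton] at this
            exact htv this.symm
          by_cases hj : v ∈ closedNbhd G j₁ <;> by_cases hl : v ∈ closedNbhd G j₂ <;>
            simp_all <;> omega
  -- colon = maxIdeal
  have hcolon : Submodule.colon (NI k G ^ 2)
      (Ideal.span {∏ i ∈ Finset.univ \ C, (X i : MvPolynomial (Fin n) k)}) =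
      maxIdeal k n := by
    refine ((maxIdeal_isMaximal k).eq_of_le ?_ hle).symm
    intro htop
    have : (1 : MvPolynomial (Fin n) k) ∈ Submodule.colon (NI k G ^ 2)
        (Ideal.span {∏ i ∈ Finset.univ \ C, (X i : MvPolynomial (Fin n) k)}) := by
      rw [htop]; trivial
    rw [Ideal.mem_colon_span_singleton, one_mul, hfprod] at this
    exact hf this
  refine ⟨hcolon, (maxIdeal_isMaximal k).isPrime, Ideal.Quotient.mk _ (monomial mF 1), ?_⟩
  rw [← (maxIdeal_isMaximal k).isPrime.radical]
  congr 1
  ext r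
  rw [Submodule.mem_colon_singleton, Submodule.mem_bot]
  have hsmul : r • (Ideal.Quotient.mk (NI k G ^ 2) (monomial mF 1)) =
      Ideal.Quotient.mk (NI k G ^ 2) (r * monomial mF 1) := rfl
  rw [hsmul, Ideal.Quotient.eq_zero_iff_mem, ← hfprod, ← Ideal.mem_colon_span_singleton, hcolon]
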